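/- Let h : ℝⁿ → ℝ be convex and L_h-Lipschitz, f : ℝⁿ → ℝ continuously differentiable, and suppose a sequence x_j → x* and parameters μ_j → 0⁺ satisfy ∇f(x_j) + ∇M_h^{μ_j}(x_j) → 0, where M_h^μ is the Moreau envelope of h. Then −∇f(x*) ∈ ∂h(x*), i.e. 0 ∈ ∇f(x*) + ∂h(x*), so x* is a stationary point of Φ = f + h. -/

import Mathlib

open scoped RealInnerProductSpace

section Aux

variable {n : ℕ}

/-- Existence of the proximal point. -/
lemma aux_prox_exists (h : EuclideanSpace ℝ (Fin n) → ℝ) (L : ℝ) (hL : 0 ≤ L)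
    (hLip : ∀ a b, |h a - h b| ≤ L * ‖a - b‖) (μ : ℝ) (hμ : 0 < μ)
    (y : EuclideanSpace ℝ (Fin n)) :
    ∃ p, ∀ z, h p + ‖p - y‖ ^ 2 / (2 * μ) ≤ h z + ‖z - y‖ ^ 2 / (2 * μ) := by
  have hcont : Continuous h := by
    have : LipschitzWith ⟨L, hL⟩ h := LipschitzWith.of_dist_le_mul fun a b => by
      rw [Real.dist_eq, dist_eq_norm]; exact hLip a b
    exact this.continuous
  have hφc : Continuous (fun z : EuclideanSpace ℝ (Fin n) => h z + ‖z - y‖ ^ 2 / (2 * μ)) :=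
    hcont.add (((continuous_id.sub continuous_const).norm.pow 2).div_const _)
  obtain ⟨p, hpmem, hpmin⟩ := (isCompact_closedBall y (2 * L * μ + 1)).exists_isMinOn
    ⟨y, Metric.mem_closedBall_self (by positivity)⟩ hφc.continuousOn
  refine ⟨p, fun z => ?_⟩
  by_cases hz : z ∈ Metric.closedBall y (2 * L * μ + 1)
  · exact hpmin hz
  · have h1 : h p + ‖p - y‖ ^ 2 / (2 * μ) ≤ h y + ‖y - y‖ ^ 2 / (2 * μ) :=
      hpmin (Metric.mem_closedBall_self (by positivity))
    have h1' : h p + ‖p - y‖ ^ 2 / (2 * μ) ≤ h y := by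
      simpa using h1
    have h2 : 2 * L * μ + 1 < ‖z - y‖ := by
      rw [Metric.mem_closedBall, not_le, dist_eq_norm] at hz; exact hz
    have h3 : h y - h z ≤ L * ‖z - y‖ := by
      have hl := hLip y z
      rw [norm_sub_rev] at hl
      exact le_trans (le_abs_self _) hl
    have ht : (0:ℝ) < ‖z - y‖ := lt_of_le_of_lt (by positivity) h2
    have h4 : L * ‖z - y‖ ≤ ‖z - y‖ ^ 2 / (2 * μ) := by
      rw [le_div_iff₀ (by positivity)]
      nlinarith [h2, ht, hμ, hL]
    linarith

/-- The vector `(y - p)/μ` is a subgradient of `h` at the proximal point `p`. -/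
lemma aux_subgrad (h : EuclideanSpace ℝ (Fin n) → ℝ) (hconv : ConvexOn ℝ Set.univ h)
    (μ : ℝ) (hμ : 0 < μ) (y p : EuclideanSpace ℝ (Fin n))
    (hmin : ∀ z, h p + ‖p - y‖ ^ 2 / (2 * μ) ≤ h z + ‖z - y‖ ^ 2 / (2 * μ))
    (z : EuclideanSpace ℝ (Fin n)) :
    h p + ⟪μ⁻¹ • (y - p), z - p⟫ ≤ h z := by
  have h2μ : (0:ℝ) < 2 * μ := by linarith
  have key : ∀ t : ℝ, 0 < t → t ≤ 1 →
      0 ≤ 2 * μ * (h z - h p) + 2 * ⟪p - y, z - p⟫ + t * ‖z - p‖ ^ 2 := by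
    intro t ht0 ht1
    have hw : h ((1 - t) • p + t • z) ≤ (1 - t) * h p + t * h z :=
      hconv.2 (Set.mem_univ p) (Set.mem_univ z) (by linarith) ht0.le (by ring)
    have hwe : (1 - t) • p + t • z = p + t • (z - p) := by module
    rw [hwe] at hw
    have hmw := hmin (p + t • (z - p))
    have hnorm : ‖p + t • (z - p) - y‖ ^ 2
        = ‖p - y‖ ^ 2 + 2 * (t * ⟪p - y, z - p⟫) + t ^ 2 * ‖z - p‖ ^ 2 := by
      have he : p + t • (z - p) - y = (p - y) + t • (z - p) := by module
      rw [he, norm_add_sq_real, real_inner_smul_right, norm_smul]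
      rw [Real.norm_eq_abs, abs_of_pos ht0]
      ring
    rw [hnorm] at hmw
    have hexp : (‖p - y‖ ^ 2 + 2 * (t * ⟪p - y, z - p⟫) + t ^ 2 * ‖z - p‖ ^ 2) / (2 * μ)
        = ‖p - y‖ ^ 2 / (2 * μ)
          + (2 * (t * ⟪p - y, z - p⟫) + t ^ 2 * ‖z - p‖ ^ 2) / (2 * μ) := by
      ring
    rw [hexp] at hmw
    have h5 : 0 ≤ t * (h z - h p)
        + (2 * (t * ⟪p - y, z - p⟫) + t ^ 2 * ‖z - p‖ ^ 2) / (2 * μ) := by linarith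
    have h6 : (-(t * (h z - h p))) * (2 * μ)
        ≤ 2 * (t * ⟪p - y, z - p⟫) + t ^ 2 * ‖z - p‖ ^ 2 := by
      rw [← le_div_iff₀ h2μ]; linarith
    have h7 : t * 0 ≤ t * (2 * μ * (h z - h p) + 2 * ⟪p - y, z - p⟫ + t * ‖z - p‖ ^ 2) := by
      nlinarith [h6]
    exact le_of_mul_le_mul_left h7 ht0
  by_contra hcon
  push_neg at hcon
  rw [real_inner_smul_left] at hcon
  have hneg : ⟪y - p, z - p⟫ = -⟪p - y, z - p⟫ := by
    rw [← neg_sub p y, inner_neg_left]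
  rw [hneg] at hcon
  -- hcon : h z < h p + μ⁻¹ * -⟪p - y, z - p⟫
  have hA : 2 * μ * (h z - h p) + 2 * ⟪p - y, z - p⟫ < 0 := by
    have h1 : μ * (h z - h p) < μ * (μ⁻¹ * -⟪p - y, z - p⟫) :=
      mul_lt_mul_of_pos_left (by linarith) hμ
    rw [← mul_assoc, mul_inv_cancel₀ (ne_of_gt hμ), one_mul] at h1
    linarith
  set A := 2 * μ * (h z - h p) + 2 * ⟪p - y, z - p⟫ with hAdef
  set B := ‖z - p‖ ^ 2 with hBdef
  have hB : 0 ≤ B := by positivity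
  have ht0 : 0 < min 1 ((-A) / (2 * (B + 1))) :=
    lt_min one_pos (div_pos (by linarith) (by linarith))
  have hk := key _ ht0 (min_le_left _ _)
  have htle : min 1 ((-A) / (2 * (B + 1))) ≤ (-A) / (2 * (B + 1)) := min_le_right _ _
  have h9 : min 1 ((-A) / (2 * (B + 1))) * B ≤ ((-A) / (2 * (B + 1))) * B :=
    mul_le_mul_of_nonneg_right htle hB
  have h10 : ((-A) / (2 * (B + 1))) * B ≤ (-A) / 2 := by
    rw [div_mul_eq_mul_div, div_le_div_iff₀ (by linarith) two_pos]
    nlinarith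
  linarith

/-- The value of the Moreau envelope. -/
lemma aux_sInf (h : EuclideanSpace ℝ (Fin n) → ℝ) (μ : ℝ)
    (y p : EuclideanSpace ℝ (Fin n))
    (hmin : ∀ z, h p + ‖p - y‖ ^ 2 / (2 * μ) ≤ h z + ‖z - y‖ ^ 2 / (2 * μ)) :
    sInf (Set.range fun z => h z + ‖z - y‖ ^ 2 / (2 * μ))
      = h p + ‖p - y‖ ^ 2 / (2 * μ) := by
  apply le_antisymm
  · exact csInf_le ⟨_, by rintro _ ⟨w, rfl⟩; exact hmin w⟩ ⟨p, rfl⟩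
  · exact le_csInf (Set.range_nonempty _) (by rintro _ ⟨w, rfl⟩; exact hmin w)

/-- Key lemma: existence of a point `p` (the proximal point of `x`) such that
`(x - p)/μ` is a subgradient of `h` at `p`, `‖x - p‖ ≤ L μ`, and `(x - p)/μ`
is the gradient of the Moreau envelope at `x`. -/
lemma moreau_key (h : EuclideanSpace ℝ (Fin n) → ℝ) (L : ℝ) (hL : 0 ≤ L)
    (hconv : ConvexOn ℝ Set.univ h) (hLip : ∀ a b, |h a - h b| ≤ L * ‖a - b‖)
    (μ : ℝ) (hμ : 0 < μ) (x : EuclideanSpace ℝ (Fin n)) :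
    ∃ p, (∀ z, h p + ⟪μ⁻¹ • (x - p), z - p⟫ ≤ h z) ∧ ‖x - p‖ ≤ L * μ ∧
      HasGradientAt (fun y => sInf (Set.range fun z => h z + ‖z - y‖ ^ 2 / (2 * μ)))
        (μ⁻¹ • (x - p)) x := by
  have h2μ : (0:ℝ) < 2 * μ := by linarith
  choose P hP using fun y => aux_prox_exists h L hL hLip μ hμ y
  have hsub : ∀ y z, h (P y) + ⟪μ⁻¹ • (y - P y), z - P y⟫ ≤ h z :=
    fun y => aux_subgrad h hconv μ hμ y (P y) (hP y)
  have hdist : ∀ y, ‖y - P y‖ ≤ L * μ := by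
    intro y
    have h1 := hsub y y
    rw [real_inner_smul_left, real_inner_self_eq_norm_sq] at h1
    have h2 : μ⁻¹ * ‖y - P y‖ ^ 2 ≤ L * ‖y - P y‖ := by
      have hl := hLip y (P y)
      have := le_abs_self (h y - h (P y))
      linarith
    rcases eq_or_lt_of_le (norm_nonneg (y - P y)) with h0 | h0
    · rw [← h0]; positivity
    · have h3 : μ⁻¹ * ‖y - P y‖ ≤ L := by
        have h2' : μ⁻¹ * ‖y - P y‖ * ‖y - P y‖ ≤ L * ‖y - P y‖ := by nlinarith [h2]
        exact le_of_mul_le_mul_right h2' h0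
      calc ‖y - P y‖ = μ * (μ⁻¹ * ‖y - P y‖) := by
            field_simp
        _ ≤ μ * L := mul_le_mul_of_nonneg_left h3 hμ.le
        _ = L * μ := mul_comm _ _
  have hnon : ∀ y w, ‖P y - P w‖ ≤ ‖y - w‖ := by
    intro y w
    have h1 := hsub y (P w)
    have h2 := hsub w (P y)
    rw [real_inner_smul_left] at h1 h2
    have h4 : ⟪y - P y, P w - P y⟫ + ⟪w - P w, P y - P w⟫ ≤ 0 := by
      have h3 : μ⁻¹ * (⟪y - P y, P w - P y⟫ + ⟪w - P w, P y - P w⟫) ≤ μ⁻¹ * 0 := by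
        rw [mul_add, mul_zero]; linarith
      exact le_of_mul_le_mul_left h3 (inv_pos.mpr hμ)
    have e1 : ⟪y - P y, P w - P y⟫
        = ⟪y - w, P w - P y⟫ + ⟪w - P w, P w - P y⟫ + ⟪P w - P y, P w - P y⟫ := by
      rw [← inner_add_left, ← inner_add_left]
      congr 1
      module
    have e2 : ⟪w - P w, P y - P w⟫ = -⟪w - P w, P w - P y⟫ := by
      rw [← inner_neg_right, neg_sub]
    have e3 : ⟪P w - P y, P w - P y⟫ = ‖P w - P y‖ ^ 2 := real_inner_self_eq_norm_sq _
    have h5 : ‖P w - P y‖ ^ 2 ≤ ⟪w - y, P w - P y⟫ := by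
      have e4 : ⟪w - y, P w - P y⟫ = -⟪y - w, P w - P y⟫ := by
        rw [← inner_neg_left, neg_sub]
      rw [e4]
      rw [e1, e2, e3] at h4
      linarith
    have h6 := real_inner_le_norm (w - y) (P w - P y)
    rcases eq_or_lt_of_le (norm_nonneg (P w - P y)) with h0 | h0
    · calc ‖P y - P w‖ = ‖P w - P y‖ := norm_sub_rev _ _
        _ = 0 := h0.symm
        _ ≤ ‖y - w‖ := norm_nonneg _
    · have h7 : ‖P w - P y‖ * ‖P w - P y‖ ≤ ‖w - y‖ * ‖P w - P y‖ := by nlinarith [h5, h6]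
      have h8 := le_of_mul_le_mul_right h7 h0
      calc ‖P y - P w‖ = ‖P w - P y‖ := norm_sub_rev _ _
        _ ≤ ‖w - y‖ := h8
        _ = ‖y - w‖ := norm_sub_rev _ _
  refine ⟨P x, hsub x, hdist x, ?_⟩
  have Minf : ∀ y, sInf (Set.range fun z => h z + ‖z - y‖ ^ 2 / (2 * μ))
      = h (P y) + ‖P y - y‖ ^ 2 / (2 * μ) := fun y => aux_sInf h μ y (P y) (hP y)
  rw [hasGradientAt_iff_isLittleO]
  have approx : ∀ y, |(h (P y) + ‖P y - y‖ ^ 2 / (2 * μ))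
      - (h (P x) + ‖P x - x‖ ^ 2 / (2 * μ)) - ⟪μ⁻¹ • (x - P x), y - x⟫|
      ≤ ‖y - x‖ ^ 2 / (2 * μ) := by
    intro y
    have hgip : ⟪μ⁻¹ • (x - P x), y - x⟫ = ⟪x - P x, y - x⟫ / μ := by
      rw [real_inner_smul_left, inv_mul_eq_div]
    have F1 : ‖P x - x‖ ^ 2 = ‖x - P x‖ ^ 2 := by rw [norm_sub_rev]
    rw [abs_le]
    constructor
    · -- lower bound
      have hlow := hP x (P y)
      -- hlow : M x expression ≤ h (P y) + ‖P y - x‖^2/(2μ)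
      have E2 : ‖P y - y‖ ^ 2
          = ‖P y - x‖ ^ 2 + 2 * ⟪P y - x, x - y⟫ + ‖y - x‖ ^ 2 := by
        have e : P y - y = (P y - x) + (x - y) := by module
        rw [e, norm_add_sq_real, norm_sub_rev x y]
      have E3 : ⟪P y - x, x - y⟫ = ⟪x - P x, y - x⟫ + ⟪P y - P x, x - y⟫ := by
        have e : P y - x = (P x - x) + (P y - P x) := by module
        rw [e, inner_add_left]
        have e2 : ⟪P x - x, x - y⟫ = ⟪x - P x, y - x⟫ := by
          rw [show P x - x = -(x - P x) by module, show x - y = -(y - x) by module,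
            inner_neg_neg]
        rw [e2]
      have E4 : -(‖y - x‖ ^ 2) ≤ ⟪P y - P x, x - y⟫ := by
        have ha := abs_real_inner_le_norm (P y - P x) (x - y)
        have hb : ‖P y - P x‖ * ‖x - y‖ ≤ ‖y - x‖ ^ 2 := by
          have h1 := hnon y x
          have h2 : ‖x - y‖ = ‖y - x‖ := norm_sub_rev _ _
          rw [h2]
          nlinarith [norm_nonneg (y - x), norm_nonneg (P y - P x)]
        have := (abs_le.mp (le_trans ha hb)).1
        linarith
      have D3 : (‖P y - x‖ ^ 2 + 2 * ⟪P y - x, x - y⟫ + ‖y - x‖ ^ 2) / (2 * μ)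
          = ‖P y - x‖ ^ 2 / (2 * μ) + ⟪P y - x, x - y⟫ / μ + ‖y - x‖ ^ 2 / (2 * μ) := by
        field_simp
      have D4 : ⟪P y - x, x - y⟫ / μ
          = ⟪x - P x, y - x⟫ / μ + ⟪P y - P x, x - y⟫ / μ := by
        rw [E3, add_div]
      have D5 : -(‖y - x‖ ^ 2) / μ ≤ ⟪P y - P x, x - y⟫ / μ :=
        (div_le_div_iff_of_pos_right hμ).mpr E4
      have D6 : -(‖y - x‖ ^ 2) / μ
          = -(‖y - x‖ ^ 2 / (2 * μ)) - ‖y - x‖ ^ 2 / (2 * μ) := by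
        field_simp
        ring
      rw [hgip]
      rw [E2, D3, D4] at *
      linarith [hlow, D5, D6.symm.le, D6.le]
    · -- upper bound
      have hup := hP y (P x)
      have E1 : ‖P x - y‖ ^ 2
          = ‖x - P x‖ ^ 2 + 2 * ⟪x - P x, y - x⟫ + ‖y - x‖ ^ 2 := by
        have e : P x - y = -(x - P x) + -(y - x) := by module
        rw [e, norm_add_sq_real, inner_neg_neg, norm_neg, norm_neg]
      have D1 : (‖x - P x‖ ^ 2 + 2 * ⟪x - P x, y - x⟫ + ‖y - x‖ ^ 2) / (2 * μ)
          = ‖x - P x‖ ^ 2 / (2 * μ) + ⟪x - P x, y - x⟫ / μ + ‖y - x‖ ^ 2 / (2 * μ) := by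
        field_simp
      rw [E1, D1] at hup
      rw [hgip, F1]
      have F2 : ‖P x - x‖ ^ 2 / (2 * μ) = ‖x - P x‖ ^ 2 / (2 * μ) := by rw [F1]
      linarith [hup]
  refine Asymptotics.isLittleO_iff.2 ?_
  intro c hc
  filter_upwards [Metric.ball_mem_nhds x (by positivity : (0:ℝ) < 2 * μ * c)] with y hy
  have h1 := approx y
  have hyx : ‖y - x‖ < 2 * μ * c := by rwa [Metric.mem_ball, dist_eq_norm] at hy
  have h2 : ‖y - x‖ ^ 2 / (2 * μ) ≤ c * ‖y - x‖ := by
    rw [div_le_iff₀ h2μ]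
    nlinarith [norm_nonneg (y - x), mul_le_mul_of_nonneg_left hyx.le (norm_nonneg (y - x))]
  calc ‖sInf (Set.range fun z => h z + ‖z - y‖ ^ 2 / (2 * μ))
        - sInf (Set.range fun z => h z + ‖z - x‖ ^ 2 / (2 * μ))
        - ⟪μ⁻¹ • (x - P x), y - x⟫‖
      = |(h (P y) + ‖P y - y‖ ^ 2 / (2 * μ)) - (h (P x) + ‖P x - x‖ ^ 2 / (2 * μ))
        - ⟪μ⁻¹ • (x - P x), y - x⟫| := by rw [Real.norm_eq_abs, Minf y, Minf x]
    _ ≤ ‖y - x‖ ^ 2 / (2 * μ) := h1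
    _ ≤ c * ‖y - x‖ := h2

end Aux

theorem stmt_12 {n : ℕ} (f h : EuclideanSpace ℝ (Fin n) → ℝ) (Lh : ℝ)
    (hf : ContDiff ℝ 1 f)
    (hconv : ConvexOn ℝ Set.univ h)
    (hLip : ∀ a b, |h a - h b| ≤ Lh * ‖a - b‖)
    (x : ℕ → EuclideanSpace ℝ (Fin n)) (xstar : EuclideanSpace ℝ (Fin n))
    (μ : ℕ → ℝ) (hμpos : ∀ j, 0 < μ j)
    (hx : Filter.Tendsto x Filter.atTop (nhds xstar))
    (hμ : Filter.Tendsto μ Filter.atTop (nhds 0))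
    (hgrad : Filter.Tendsto
      (fun j => gradient f (x j) +
        gradient (fun y => sInf (Set.range fun z => h z + ‖z - y‖ ^ 2 / (2 * μ j))) (x j))
      Filter.atTop (nhds 0)) :
    ∀ z, h xstar + ⟪-gradient f xstar, z - xstar⟫ ≤ h z := by
  set L := max Lh 0 with hLdef
  have hL0 : 0 ≤ L := le_max_right _ _
  have hLip' : ∀ a b, |h a - h b| ≤ L * ‖a - b‖ := fun a b =>
    le_trans (hLip a b) (mul_le_mul_of_nonneg_right (le_max_left _ _) (norm_nonneg _))
  choose p hsub hdist hgradat using fun j =>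
    moreau_key h L hL0 hconv hLip' (μ j) (hμpos j) (x j)
  set g : ℕ → EuclideanSpace ℝ (Fin n) := fun j => (μ j)⁻¹ • (x j - p j) with hgdef
  have hG : ∀ j, gradient
      (fun y => sInf (Set.range fun z => h z + ‖z - y‖ ^ 2 / (2 * μ j))) (x j) = g j :=
    fun j => (hgradat j).gradient
  have hgrad' : Filter.Tendsto (fun j => gradient f (x j) + g j) Filter.atTop (nhds 0) := by
    refine hgrad.congr fun j => ?_
    rw [hG j]
  have hcontgrad : Continuous (fun y => gradient f y) := by
    have h1 : Continuous (fderiv ℝ f) := hf.continuous_fderiv one_ne_zero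
    exact (InnerProductSpace.toDual ℝ (EuclideanSpace ℝ (Fin n))).symm.continuous.comp h1
  have hgf : Filter.Tendsto (fun j => gradient f (x j)) Filter.atTop
      (nhds (gradient f xstar)) := (hcontgrad.tendsto xstar).comp hx
  have hgtend : Filter.Tendsto g Filter.atTop (nhds (-gradient f xstar)) := by
    have := hgrad'.sub hgf
    rw [zero_sub] at this
    refine this.congr fun j => ?_
    simp
  have hptend : Filter.Tendsto p Filter.atTop (nhds xstar) := by
    have hdiff : Filter.Tendsto (fun j => x j - p j) Filter.atTop (nhds 0) := by
      apply squeeze_zero_norm (fun j => hdist j)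
      have : Filter.Tendsto (fun j => L * μ j) Filter.atTop (nhds (L * 0)) :=
        hμ.const_mul L
      rwa [mul_zero] at this
    have := hx.sub hdiff
    rw [sub_zero] at this
    refine this.congr fun j => ?_
    simp
  have hcont : Continuous h := by
    have : LipschitzWith ⟨L, hL0⟩ h := LipschitzWith.of_dist_le_mul fun a b => by
      rw [Real.dist_eq, dist_eq_norm]; exact hLip' a b
    exact this.continuous
  intro z
  have key : ∀ j, h (p j) + ⟪g j, z - p j⟫ ≤ h z := fun j => hsub j z
  have hlhs : Filter.Tendsto (fun j => h (p j) + ⟪g j, z - p j⟫) Filter.atTop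
      (nhds (h xstar + ⟪-gradient f xstar, z - xstar⟫)) := by
    refine Filter.Tendsto.add ((hcont.tendsto xstar).comp hptend) ?_
    exact hgtend.inner (tendsto_const_nhds.sub hptend)
  exact le_of_tendsto hlhs (Filter.Eventually.of_forall key)
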